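/- Let (U₁, U₂) have a nondegenerate bivariate normal distribution with means μ₁, μ₂, standard deviations σ₁, σ₂ > 0, correlation ρ ∈ (−1, 1), and covariance σ₁₂ = ρσ₁σ₂. Then for all integers k ≥ 1 and m ≥ 1: k·(σ₁²σ₂² − σ₁₂²)·E[U₁^{k-1}U₂^m·1{U₁>0, U₂>0}] = E[(σ₂²·U₁^{k+1}U₂^m − σ₁₂·U₁^k U₂^{m+1} − (σ₂²μ₁ − σ₁₂μ₂)·U₁^k U₂^m)·1{U₁>0, U₂>0}]. -/

import Mathlib

open MeasureTheory Real Set Filter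

lemma pow_le_factorial_mul_exp {t : ℝ} (ht : 0 ≤ t) (n : ℕ) :
    t ^ n ≤ (n.factorial : ℝ) * Real.exp t := by
  have h1 : t ^ n / (n.factorial : ℝ) ≤ ∑ i ∈ Finset.range (n+1), t ^ i / (i.factorial : ℝ) :=
    Finset.single_le_sum (f := fun i => t ^ i / (i.factorial : ℝ)) (fun i _ => by positivity)
      (Finset.self_mem_range_succ n)
  have h2 := Real.sum_le_exp_of_nonneg ht (n+1)
  have h3 := h1.trans h2
  rw [div_le_iff₀ (by positivity)] at h3
  linarith

lemma integrable_exp_quad {c : ℝ} (hc : 0 < c) (b d : ℝ) :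
    Integrable fun x : ℝ => Real.exp (-(c * x ^ 2 + b * x + d)) := by
  have h := (integrable_exp_neg_mul_sq hc).comp_add_right (b / (2 * c))
  have h2 := h.const_mul (Real.exp (b ^ 2 / (4 * c) - d))
  refine h2.congr (Filter.Eventually.of_forall fun x => ?_)
  simp only [← Real.exp_add]
  congr 1
  field_simp
  ring

lemma integrable_pow_mul_exp_quad {a : ℝ} (ha : 0 < a) (b d : ℝ) (n : ℕ) :
    Integrable fun x : ℝ => x ^ n * Real.exp (-(a * x ^ 2 + b * x + d)) := by
  have hg : Integrable fun x : ℝ =>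
      Real.exp (-(a * x ^ 2 + b * x + d))
        + (2 / a) ^ n * (n.factorial : ℝ) * Real.exp (-(a / 2 * x ^ 2 + b * x + d)) :=
    (integrable_exp_quad ha b d).add
      ((integrable_exp_quad (by positivity : (0:ℝ) < a / 2) b d).const_mul _)
  refine hg.mono' (Continuous.aestronglyMeasurable (by continuity))
    (Filter.Eventually.of_forall fun x => ?_)
  have hxb : |x| ^ n ≤ 1 + (2 / a) ^ n * (n.factorial : ℝ) * Real.exp (a / 2 * x ^ 2) := by
    rcases le_or_gt |x| 1 with hx | hx
    · have : |x| ^ n ≤ 1 := pow_le_one₀ (abs_nonneg x) hx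
      have : (0:ℝ) ≤ (2 / a) ^ n * (n.factorial : ℝ) * Real.exp (a / 2 * x ^ 2) := by positivity
      linarith
    · have h1 : |x| ^ n ≤ |x| ^ (2 * n) :=
        pow_le_pow_right₀ hx.le (by omega)
      have h2 : |x| ^ (2 * n) = (x ^ 2) ^ n := by
        rw [pow_mul, sq_abs]
      have h3 : (x ^ 2) ^ n = (2 / a) ^ n * (a / 2 * x ^ 2) ^ n := by
        rw [← mul_pow]; congr 1; field_simp
      have h4 : (a / 2 * x ^ 2) ^ n ≤ (n.factorial : ℝ) * Real.exp (a / 2 * x ^ 2) :=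
        pow_le_factorial_mul_exp (by positivity) n
      calc |x| ^ n ≤ (x ^ 2) ^ n := h1.trans_eq h2
        _ = (2 / a) ^ n * (a / 2 * x ^ 2) ^ n := h3
        _ ≤ (2 / a) ^ n * ((n.factorial : ℝ) * Real.exp (a / 2 * x ^ 2)) := by
            gcongr
        _ = (2 / a) ^ n * (n.factorial : ℝ) * Real.exp (a / 2 * x ^ 2) := by ring
        _ ≤ 1 + (2 / a) ^ n * (n.factorial : ℝ) * Real.exp (a / 2 * x ^ 2) := by linarith
  have hnorm : ‖x ^ n * Real.exp (-(a * x ^ 2 + b * x + d))‖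
      = |x| ^ n * Real.exp (-(a * x ^ 2 + b * x + d)) := by
    rw [Real.norm_eq_abs, abs_mul, abs_pow, abs_of_pos (Real.exp_pos _)]
  rw [hnorm]
  calc |x| ^ n * Real.exp (-(a * x ^ 2 + b * x + d))
      ≤ (1 + (2 / a) ^ n * (n.factorial : ℝ) * Real.exp (a / 2 * x ^ 2))
          * Real.exp (-(a * x ^ 2 + b * x + d)) := by
        gcongr
    _ = Real.exp (-(a * x ^ 2 + b * x + d))
        + (2 / a) ^ n * (n.factorial : ℝ)
          * (Real.exp (a / 2 * x ^ 2) * Real.exp (-(a * x ^ 2 + b * x + d))) := by ring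
    _ = Real.exp (-(a * x ^ 2 + b * x + d))
        + (2 / a) ^ n * (n.factorial : ℝ) * Real.exp (-(a / 2 * x ^ 2 + b * x + d)) := by
        rw [← Real.exp_add]; ring_nf

lemma tendsto_pow_mul_exp_quad {a : ℝ} (ha : 0 < a) (b : ℝ) (n : ℕ) :
    Tendsto (fun x : ℝ => x ^ n * Real.exp (-(a * x ^ 2 + b * x))) atTop (nhds 0) := by
  refine squeeze_zero' ?_ ?_ (tendsto_pow_mul_exp_neg_atTop_nhds_zero n)
  · filter_upwards [eventually_ge_atTop (0:ℝ)] with x hx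
    positivity
  · filter_upwards [eventually_ge_atTop (max 0 ((1 - b) / a))] with x hx
    have hx0 : (0:ℝ) ≤ x := le_trans (le_max_left _ _) hx
    have hx1 : (1 - b) / a ≤ x := le_trans (le_max_right _ _) hx
    have h2 : 1 - b ≤ x * a := (div_le_iff₀ ha).mp hx1
    have h3 : x ≤ a * x ^ 2 + b * x := by nlinarith
    exact mul_le_mul_of_nonneg_left (Real.exp_le_exp.2 (by linarith)) (pow_nonneg hx0 n)

lemma integrableOn_pow_mul_exp_quad {a : ℝ} (ha : 0 < a) (b : ℝ) (n : ℕ) :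
    IntegrableOn (fun x : ℝ => x ^ n * Real.exp (-(a * x ^ 2 + b * x))) (Set.Ioi 0) := by
  have h := integrable_pow_mul_exp_quad ha b 0 n
  simp only [add_zero] at h
  exact h.integrableOn

lemma ibp_Ioi {a : ℝ} (ha : 0 < a) (b : ℝ) (j : ℕ) :
    ∫ x in Set.Ioi (0:ℝ), ((j:ℝ)+1) * x ^ j * Real.exp (-(a * x ^ 2 + b * x))
      = ∫ x in Set.Ioi (0:ℝ), (2*a*x+b) * x ^ (j+1) * Real.exp (-(a * x ^ 2 + b * x)) := by
  set e : ℝ → ℝ := fun x => Real.exp (-(a * x ^ 2 + b * x)) with he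
  set F : ℝ → ℝ := fun x => x ^ (j+1) * e x with hF
  set F' : ℝ → ℝ := fun x => ((j:ℝ)+1) * x ^ j * e x - (2*a*x+b) * x ^ (j+1) * e x with hF'
  have hderiv : ∀ x : ℝ, HasDerivAt F (F' x) x := by
    intro x
    have h1 : HasDerivAt (fun x : ℝ => x ^ (j+1)) (((j:ℝ)+1) * x ^ j) x := by
      simpa using hasDerivAt_pow (j+1) x
    have h2 : HasDerivAt (fun x : ℝ => -(a * x ^ 2 + b * x)) (-(2*a*x+b)) x := by
      have ha2 : HasDerivAt (fun x : ℝ => a * x ^ 2) (a * (2 * x)) x :=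
        (hasDerivAt_pow 2 x).const_mul a |>.congr_deriv (by ring_nf)
      have hb2 : HasDerivAt (fun x : ℝ => b * x) b x := by
        simpa using (hasDerivAt_id x).const_mul b
      exact ((ha2.add hb2).neg).congr_deriv (by ring)
    have h3 := h2.exp
    have h4 := h1.mul h3
    refine h4.congr_deriv ?_
    simp only [hF', he]
    ring
  have hg1 : IntegrableOn (fun x : ℝ => ((j:ℝ)+1) * x ^ j * e x) (Set.Ioi 0) := by
    have := (integrableOn_pow_mul_exp_quad ha b j).const_mul ((j:ℝ)+1)
    exact this.congr (Filter.Eventually.of_forall fun x => by simp only [he]; ring)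
  have hg2 : IntegrableOn (fun x : ℝ => (2*a*x+b) * x ^ (j+1) * e x) (Set.Ioi 0) := by
    have h1 := (integrableOn_pow_mul_exp_quad ha b (j+2)).const_mul (2*a)
    have h2 := (integrableOn_pow_mul_exp_quad ha b (j+1)).const_mul b
    exact (h1.add h2).congr (Filter.Eventually.of_forall fun x => by
      simp only [he, Pi.add_apply]; ring)
  have hint : IntegrableOn F' (Set.Ioi 0) := hg1.sub hg2
  have htend : Tendsto F atTop (nhds 0) := by
    simpa [hF, he] using tendsto_pow_mul_exp_quad ha b (j+1)
  have key := integral_Ioi_of_hasDerivAt_of_tendsto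
    (Continuous.continuousWithinAt (by fun_prop : Continuous F))
    (fun x _ => hderiv x) hint htend
  have hF0 : F 0 = 0 := by simp [hF]
  rw [hF0, sub_zero] at key
  have hsub := integral_sub hg1 hg2
  have : (∫ x in Set.Ioi (0:ℝ), ((j:ℝ)+1) * x ^ j * e x)
      - ∫ x in Set.Ioi (0:ℝ), (2*a*x+b) * x ^ (j+1) * e x = 0 := by
    rw [← hsub]; exact key
  linarith


/-- Density of the nondegenerate bivariate normal distribution with means `μ₁, μ₂`,
standard deviations `σ₁, σ₂ > 0` and correlation `ρ ∈ (−1, 1)`. -/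
noncomputable def binormalPDF (μ₁ μ₂ σ₁ σ₂ ρ u₁ u₂ : ℝ) : ℝ :=
  (1 / (2 * Real.pi * σ₁ * σ₂ * Real.sqrt (1 - ρ ^ 2))) *
    Real.exp (-(1 / (2 * (1 - ρ ^ 2))) *
      ((u₁ - μ₁) ^ 2 / σ₁ ^ 2 - 2 * ρ * (u₁ - μ₁) * (u₂ - μ₂) / (σ₁ * σ₂)
        + (u₂ - μ₂) ^ 2 / σ₂ ^ 2))

lemma integrable_abs_pow_gauss {c σ : ℝ} (hc : 0 < c) (hσ : 0 < σ) (μ : ℝ) (n : ℕ) :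
    Integrable fun u : ℝ => |u| ^ n * Real.exp (-(c * (u - μ) ^ 2 / σ ^ 2)) := by
  have h := (integrable_pow_mul_exp_quad (show (0:ℝ) < c / σ ^ 2 by positivity)
    (-2 * c * μ / σ ^ 2) (c * μ ^ 2 / σ ^ 2) n).abs
  refine h.congr (Filter.Eventually.of_forall fun u => ?_)
  simp only [abs_mul, abs_pow, abs_of_pos (Real.exp_pos _)]
  congr 2
  field_simp
  ring

lemma binormal_integrable (μ₁ μ₂ σ₁ σ₂ ρ : ℝ) (hσ₁ : 0 < σ₁) (hσ₂ : 0 < σ₂)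
    (hρ : ρ ∈ Set.Ioo (-1 : ℝ) 1) (n m : ℕ) :
    Integrable fun p : ℝ × ℝ => p.1 ^ n * p.2 ^ m * binormalPDF μ₁ μ₂ σ₁ σ₂ ρ p.1 p.2 := by
  obtain ⟨hρ1, hρ2⟩ := hρ
  have hρsq : 0 < 1 - ρ ^ 2 := by nlinarith
  have hρabs : |ρ| < 1 := abs_lt.2 ⟨hρ1, hρ2⟩
  have hsqrt : 0 < Real.sqrt (1 - ρ ^ 2) := Real.sqrt_pos.2 hρsq
  obtain ⟨K, hK⟩ : ∃ K : ℝ, K = 1 / (2 * Real.pi * σ₁ * σ₂ * Real.sqrt (1 - ρ ^ 2)) := ⟨_, rfl⟩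
  have hpi := Real.pi_pos
  have hKpos : 0 < K := by
    rw [hK]; positivity
  have habs : 0 < 1 - |ρ| := by linarith
  obtain ⟨c, hc⟩ : ∃ c : ℝ, c = (1 - |ρ|) / (2 * (1 - ρ ^ 2)) := ⟨_, rfl⟩
  have hcpos : 0 < c := by rw [hc]; positivity
  have h₁ : Integrable fun u : ℝ => K * (|u| ^ n * Real.exp (-(c * (u - μ₁) ^ 2 / σ₁ ^ 2))) :=
    (integrable_abs_pow_gauss hcpos hσ₁ μ₁ n).const_mul K
  have h₂ : Integrable fun v : ℝ => |v| ^ m * Real.exp (-(c * (v - μ₂) ^ 2 / σ₂ ^ 2)) :=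
    integrable_abs_pow_gauss hcpos hσ₂ μ₂ m
  have hG : Integrable (fun p : ℝ × ℝ =>
      (K * (|p.1| ^ n * Real.exp (-(c * (p.1 - μ₁) ^ 2 / σ₁ ^ 2))))
        * (|p.2| ^ m * Real.exp (-(c * (p.2 - μ₂) ^ 2 / σ₂ ^ 2)))) (volume) := by
    rw [Measure.volume_eq_prod]
    exact h₁.mul_prod h₂
  have hcont : Continuous fun p : ℝ × ℝ => p.1 ^ n * p.2 ^ m * binormalPDF μ₁ μ₂ σ₁ σ₂ ρ p.1 p.2 := by
    unfold binormalPDF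
    fun_prop
  refine hG.mono' hcont.aestronglyMeasurable (Filter.Eventually.of_forall fun p => ?_)
  obtain ⟨u, v⟩ := p
  obtain ⟨s, hs⟩ : ∃ s : ℝ, s = (u - μ₁) / σ₁ := ⟨_, rfl⟩
  obtain ⟨t, ht⟩ : ∃ t : ℝ, t = (v - μ₂) / σ₂ := ⟨_, rfl⟩
  have hXeq : ((u - μ₁) ^ 2 / σ₁ ^ 2 - 2 * ρ * (u - μ₁) * (v - μ₂) / (σ₁ * σ₂)
      + (v - μ₂) ^ 2 / σ₂ ^ 2) = s ^ 2 - 2 * ρ * s * t + t ^ 2 := by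
    rw [hs, ht]; field_simp; try ring
  have hc1 : c * (u - μ₁) ^ 2 / σ₁ ^ 2 = c * s ^ 2 := by rw [hs]; field_simp
  have hc2 : c * (v - μ₂) ^ 2 / σ₂ ^ 2 = c * t ^ 2 := by rw [ht]; field_simp
  have hexple : -(1 / (2 * (1 - ρ ^ 2))) * (s ^ 2 - 2 * ρ * s * t + t ^ 2)
      ≤ -(c * s ^ 2) + -(c * t ^ 2) := by
    have hinv : 0 < 1 / (2 * (1 - ρ ^ 2)) := by positivity
    have hbr : (1 - |ρ|) * (s ^ 2 + t ^ 2) - (s ^ 2 - 2 * ρ * s * t + t ^ 2) ≤ 0 := by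
      nlinarith [sq_nonneg (s + t), sq_nonneg (s - t), le_abs_self ρ, neg_abs_le ρ]
    have hprod := mul_nonpos_of_nonneg_of_nonpos hinv.le hbr
    have hceq : c = (1 - |ρ|) * (1 / (2 * (1 - ρ ^ 2))) := by rw [hc]; ring
    rw [hceq]
    nlinarith [hprod]
  have hPpos : 0 < binormalPDF μ₁ μ₂ σ₁ σ₂ ρ u v := by
    unfold binormalPDF
    positivity
  calc ‖u ^ n * v ^ m * binormalPDF μ₁ μ₂ σ₁ σ₂ ρ u v‖
      = |u| ^ n * |v| ^ m * binormalPDF μ₁ μ₂ σ₁ σ₂ ρ u v := by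
        rw [Real.norm_eq_abs, abs_mul, abs_mul, abs_pow, abs_pow, abs_of_pos hPpos]
    _ = K * (|u| ^ n * |v| ^ m) * Real.exp (-(1 / (2 * (1 - ρ ^ 2)))
          * (s ^ 2 - 2 * ρ * s * t + t ^ 2)) := by
        unfold binormalPDF
        rw [hXeq, ← hK]; ring
    _ ≤ K * (|u| ^ n * |v| ^ m) * Real.exp (-(c * s ^ 2) + -(c * t ^ 2)) := by
        have hm : (0:ℝ) ≤ K * (|u| ^ n * |v| ^ m) :=
          mul_nonneg hKpos.le (by positivity)
        exact mul_le_mul_of_nonneg_left (Real.exp_le_exp.2 hexple) hm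
    _ = (K * (|u| ^ n * Real.exp (-(c * (u - μ₁) ^ 2 / σ₁ ^ 2))))
          * (|v| ^ m * Real.exp (-(c * (v - μ₂) ^ 2 / σ₂ ^ 2))) := by
        rw [hc1, hc2, Real.exp_add]; ring

/-- First key equation in the proof of Proposition 1.1 (integration by parts in `u₁`):
`k·(σ₁²σ₂² − σ₁₂²)·E[U₁^{k-1}U₂^m·1{U₁>0,U₂>0}]
  = E[(σ₂²·U₁^{k+1}U₂^m − σ₁₂·U₁^k U₂^{m+1} − (σ₂²μ₁ − σ₁₂μ₂)·U₁^k U₂^m)·1{U₁>0,U₂>0}]`. -/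
theorem prop1_1_first_key_equation (μ₁ μ₂ σ₁ σ₂ ρ : ℝ) (hσ₁ : 0 < σ₁) (hσ₂ : 0 < σ₂)
    (hρ : ρ ∈ Set.Ioo (-1 : ℝ) 1) (σ₁₂ : ℝ) (hσ₁₂ : σ₁₂ = ρ * σ₁ * σ₂)
    (k m : ℕ) (hk : 1 ≤ k) (hm : 1 ≤ m) :
    (k : ℝ) * (σ₁ ^ 2 * σ₂ ^ 2 - σ₁₂ ^ 2) *
        ∫ p in Set.Ioi (0 : ℝ) ×ˢ Set.Ioi (0 : ℝ),
          p.1 ^ (k - 1) * p.2 ^ m * binormalPDF μ₁ μ₂ σ₁ σ₂ ρ p.1 p.2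
      = ∫ p in Set.Ioi (0 : ℝ) ×ˢ Set.Ioi (0 : ℝ),
          (σ₂ ^ 2 * (p.1 ^ (k + 1) * p.2 ^ m) - σ₁₂ * (p.1 ^ k * p.2 ^ (m + 1))
            - (σ₂ ^ 2 * μ₁ - σ₁₂ * μ₂) * (p.1 ^ k * p.2 ^ m))
            * binormalPDF μ₁ μ₂ σ₁ σ₂ ρ p.1 p.2 := by
  obtain ⟨j, rfl⟩ : ∃ j, k = j + 1 := ⟨k - 1, (Nat.succ_pred_eq_of_pos hk).symm⟩
  obtain ⟨hρ1, hρ2⟩ := hρ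
  have hρsq : 0 < 1 - ρ ^ 2 := by nlinarith
  have hint : ∀ n' m' : ℕ, Integrable
      (fun p : ℝ × ℝ => p.1 ^ n' * p.2 ^ m' * binormalPDF μ₁ μ₂ σ₁ σ₂ ρ p.1 p.2) :=
    fun n' m' => binormal_integrable μ₁ μ₂ σ₁ σ₂ ρ hσ₁ hσ₂ ⟨hρ1, hρ2⟩ n' m'
  have swap : ∀ f : ℝ × ℝ → ℝ, Integrable f →
      (∫ p in Set.Ioi (0:ℝ) ×ˢ Set.Ioi (0:ℝ), f p)
        = ∫ y in Set.Ioi (0:ℝ), ∫ x in Set.Ioi (0:ℝ), f (x, y) := by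
    intro f hf
    have h2 : Integrable f
        (((volume : Measure ℝ).restrict (Set.Ioi 0)).prod
          ((volume : Measure ℝ).restrict (Set.Ioi 0))) := by
      rw [Measure.prod_restrict, ← Measure.volume_eq_prod]
      exact hf.integrableOn
    calc (∫ p in Set.Ioi (0:ℝ) ×ˢ Set.Ioi (0:ℝ), f p)
        = ∫ p, f p ∂(((volume : Measure ℝ).restrict (Set.Ioi 0)).prod
            ((volume : Measure ℝ).restrict (Set.Ioi 0))) := by
          rw [Measure.prod_restrict, ← Measure.volume_eq_prod]
      _ = ∫ y, ∫ x, f (x, y) ∂((volume : Measure ℝ).restrict (Set.Ioi 0))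
            ∂((volume : Measure ℝ).restrict (Set.Ioi 0)) := integral_prod_symm f h2
  have hR : Integrable (fun p : ℝ × ℝ =>
      (σ₂ ^ 2 * (p.1 ^ (j + 1 + 1) * p.2 ^ m) - σ₁₂ * (p.1 ^ (j + 1) * p.2 ^ (m + 1))
        - (σ₂ ^ 2 * μ₁ - σ₁₂ * μ₂) * (p.1 ^ (j + 1) * p.2 ^ m))
        * binormalPDF μ₁ μ₂ σ₁ σ₂ ρ p.1 p.2) := by
    have h1 := (hint (j + 1 + 1) m).const_mul (σ₂ ^ 2)
    have h2 := (hint (j + 1) (m + 1)).const_mul σ₁₂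
    have h3 := (hint (j + 1) m).const_mul (σ₂ ^ 2 * μ₁ - σ₁₂ * μ₂)
    exact ((h1.sub h2).sub h3).congr (Filter.Eventually.of_forall fun p => by
      simp only [Pi.sub_apply]; ring)
  have hL : Integrable
      (fun p : ℝ × ℝ => p.1 ^ (j + 1 - 1) * p.2 ^ m * binormalPDF μ₁ μ₂ σ₁ σ₂ ρ p.1 p.2) := by
    simpa using hint j m
  rw [swap _ hL, swap _ hR, ← integral_const_mul]
  refine integral_congr_ae (Filter.Eventually.of_forall fun y => ?_)
  simp only [Nat.add_sub_cancel]
  -- now a statement about 1D integrals in x, for fixed y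
  obtain ⟨a, ha⟩ : ∃ a : ℝ, a = 1 / (2 * (1 - ρ ^ 2) * σ₁ ^ 2) := ⟨_, rfl⟩
  have hapos : 0 < a := by rw [ha]; positivity
  obtain ⟨b, hb⟩ : ∃ b : ℝ, b = -((μ₁ / σ₁ ^ 2 + ρ * (y - μ₂) / (σ₁ * σ₂)) / (1 - ρ ^ 2)) :=
    ⟨_, rfl⟩
  obtain ⟨d, hd⟩ : ∃ d : ℝ, d = (μ₁ ^ 2 / σ₁ ^ 2 + 2 * ρ * μ₁ * (y - μ₂) / (σ₁ * σ₂)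
      + (y - μ₂) ^ 2 / σ₂ ^ 2) / (2 * (1 - ρ ^ 2)) := ⟨_, rfl⟩
  obtain ⟨C, hC⟩ : ∃ C : ℝ,
      C = (1 / (2 * Real.pi * σ₁ * σ₂ * Real.sqrt (1 - ρ ^ 2))) * Real.exp (-d) := ⟨_, rfl⟩
  have hP : ∀ x : ℝ, binormalPDF μ₁ μ₂ σ₁ σ₂ ρ x y = C * Real.exp (-(a * x ^ 2 + b * x)) := by
    intro x
    have hE : -(1 / (2 * (1 - ρ ^ 2))) * ((x - μ₁) ^ 2 / σ₁ ^ 2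
        - 2 * ρ * (x - μ₁) * (y - μ₂) / (σ₁ * σ₂) + (y - μ₂) ^ 2 / σ₂ ^ 2)
        = -d + -(a * x ^ 2 + b * x) := by
      rw [ha, hb, hd]; field_simp; ring
    rw [binormalPDF, hE, Real.exp_add, hC]; ring
  have hkey : ∀ x : ℝ, (σ₁ ^ 2 * σ₂ ^ 2 - σ₁₂ ^ 2) * (2 * a * x + b)
      = σ₂ ^ 2 * x - σ₁₂ * y - (σ₂ ^ 2 * μ₁ - σ₁₂ * μ₂) := by
    intro x
    rw [hσ₁₂, ha, hb]; field_simp; ring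
  have hrw1 : (∫ x in Set.Ioi (0:ℝ), x ^ j * y ^ m * binormalPDF μ₁ μ₂ σ₁ σ₂ ρ x y)
      = (y ^ m * C) * ∫ x in Set.Ioi (0:ℝ), x ^ j * Real.exp (-(a * x ^ 2 + b * x)) := by
    rw [← integral_const_mul]
    exact integral_congr_ae (Filter.Eventually.of_forall fun x => by dsimp only; rw [hP x]; ring)
  have hrw2 : (∫ x in Set.Ioi (0:ℝ),
        (σ₂ ^ 2 * (x ^ (j + 1 + 1) * y ^ m) - σ₁₂ * (x ^ (j + 1) * y ^ (m + 1))
          - (σ₂ ^ 2 * μ₁ - σ₁₂ * μ₂) * (x ^ (j + 1) * y ^ m))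
          * binormalPDF μ₁ μ₂ σ₁ σ₂ ρ x y)
      = (y ^ m * C) * ((σ₁ ^ 2 * σ₂ ^ 2 - σ₁₂ ^ 2)
          * ∫ x in Set.Ioi (0:ℝ), (2 * a * x + b) * x ^ (j + 1)
              * Real.exp (-(a * x ^ 2 + b * x))) := by
    rw [← integral_const_mul, ← integral_const_mul]
    refine integral_congr_ae (Filter.Eventually.of_forall fun x => ?_)
    dsimp only
    rw [hP x]
    linear_combination (-(y ^ m * x ^ (j + 1) * C * Real.exp (-(a * x ^ 2 + b * x)))) * hkey x
  have h5 : (∫ x in Set.Ioi (0:ℝ), ((j:ℝ) + 1) * x ^ j * Real.exp (-(a * x ^ 2 + b * x)))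
      = ((j:ℝ) + 1) * ∫ x in Set.Ioi (0:ℝ), x ^ j * Real.exp (-(a * x ^ 2 + b * x)) := by
    rw [← integral_const_mul]
    exact integral_congr_ae (Filter.Eventually.of_forall fun x => by dsimp only; ring)
  have hibp := ibp_Ioi hapos b j
  have h6 : (∫ x in Set.Ioi (0:ℝ), (2 * a * x + b) * x ^ (j + 1)
        * Real.exp (-(a * x ^ 2 + b * x)))
      = ((j:ℝ) + 1) * ∫ x in Set.Ioi (0:ℝ), x ^ j * Real.exp (-(a * x ^ 2 + b * x)) :=
    hibp.symm.trans h5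
  rw [hrw1, hrw2, h6]
  push_cast
  ring
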